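/- For a sequence t of type μ, define the sharp partition μ^♯(t) = (μ^♯_1, μ^♯_2, ...) where μ^♯_i is the number of good i's in t. Then μ^♯(t) is a partition, i.e. μ^♯_{i+1} ≤ μ^♯_i for all i, and moreover μ^♯_i ≤ μ_i for all i. -/

import Mathlib

/- Symbols are 0-based: the paper's symbol `i ∈ {1, …, r}` is `i - 1` here, and
`μ_i` is `μ.blocks.getD (i-1) 0`.  Good/bad terms of a word are as in the paper:
all 0's are good, and an `a > 0` is good iff the number of previous good `(a-1)`'s
strictly exceeds the number of previous good `a`'s. -/

def goodStep (g : ℕ → ℕ) (a : ℕ) : ℕ → ℕ :=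
  if a = 0 ∨ g a < g (a - 1) then Function.update g a (g a + 1) else g

/-- `goodCounts t s` = the number of good occurrences of the symbol `s` in `t`;
this is the part `μ♯_s(t)` of the sharp partition of `t`. -/
def goodCounts (t : List ℕ) : ℕ → ℕ :=
  t.foldl goodStep (fun _ => 0)

def ofTypeL {m : ℕ} (μ : Composition m) (t : List ℕ) : Prop :=
  t.length = m ∧ (∀ a ∈ t, a < μ.length) ∧
    ∀ k : Fin μ.length, t.count (k : ℕ) = μ.blocksFun k

lemma goodStep_mono (g : ℕ → ℕ) (a : ℕ) (h : ∀ i, g (i+1) ≤ g i) :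
    ∀ i, goodStep g a (i+1) ≤ goodStep g a i := by
  intro i
  unfold goodStep
  split
  · rename_i hc
    rcases eq_or_ne (i+1) a with rfl | h1
    · have ha : g (i+1) < g i := by
        rcases hc with h0 | h0
        · omega
        · simpa using h0
      rw [Function.update_self, Function.update_of_ne (by omega)]
      omega
    · rw [Function.update_of_ne h1]
      rcases eq_or_ne i a with rfl | h2
      · rw [Function.update_self]; exact (h i).trans (Nat.le_succ _)
      · rw [Function.update_of_ne h2]; exact h i
  · exact h i

lemma goodCounts_mono (t : List ℕ) : ∀ i, goodCounts t (i+1) ≤ goodCounts t i := by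
  have key : ∀ (t : List ℕ) (g : ℕ → ℕ), (∀ i, g (i+1) ≤ g i) →
      ∀ i, t.foldl goodStep g (i+1) ≤ t.foldl goodStep g i := by
    intro t
    induction t with
    | nil => intro g hg i; exact hg i
    | cons a t ih => intro g hg i; exact ih _ (goodStep_mono g a hg) i
  exact key t _ (fun _ => le_refl 0)

lemma goodStep_le (g : ℕ → ℕ) (a i : ℕ) :
    goodStep g a i ≤ g i + (if i = a then 1 else 0) := by
  unfold goodStep
  split
  · rcases eq_or_ne i a with rfl | h
    · rw [Function.update_self]; simp
    · rw [Function.update_of_ne h]; simp [h]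
  · split <;> omega

lemma goodCounts_le_count (t : List ℕ) : ∀ g i, t.foldl goodStep g i ≤ g i + t.count i := by
  induction t with
  | nil => simp
  | cons a t ih =>
    intro g i
    simp only [List.foldl_cons, List.count_cons]
    calc t.foldl goodStep (goodStep g a) i ≤ goodStep g a i + t.count i := ih _ i
      _ ≤ g i + (if i = a then 1 else 0) + t.count i := by
          exact Nat.add_le_add_right (goodStep_le g a i) _
      _ ≤ g i + (t.count i + if (a == i) = true then 1 else 0) := by
          rcases eq_or_ne i a with rfl | h
          · simp; omega
          · simp [h, Ne.symm h]
    
/-- the sharp sequence `μ♯(t)` of a sequence `t` of type `μ` is a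
partition, with `μ♯_{i+1}(t) ≤ μ♯_i(t)` and `μ♯_i(t) ≤ μ_i` for all `i`. -/
theorem stmt6 (m : ℕ) (μ : Composition m) (t : List ℕ) (ht : ofTypeL μ t) :
    ∀ i : ℕ, goodCounts t (i + 1) ≤ goodCounts t i ∧ goodCounts t i ≤ μ.blocks.getD i 0 := by
  intro i
  refine ⟨goodCounts_mono t i, ?_⟩
  have hle : goodCounts t i ≤ t.count i := by
    simpa [goodCounts] using goodCounts_le_count t (fun _ => 0) i
  obtain ⟨-, hall, hcount⟩ := ht
  by_cases hi : i < μ.length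
  · refine hle.trans ?_
    rw [hcount ⟨i, hi⟩]
    simp [Composition.blocksFun, List.getD, Composition.blocks_length]
    rw [List.getElem?_eq_getElem (by simpa [Composition.blocks_length] using hi)]
    simp
  · have : t.count i = 0 := by
      rw [List.count_eq_zero]
      intro h; exact hi (hall i h)
    omega
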